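/- A point R ∈ ℝ² is a fixed point of the affine map λ = T_{P'} ∘ T_P⁻¹, i.e. T_{P'}(T_P⁻¹(R)) = R, if and only if R lies both on the line through G and V and on the line through T_P(G) and T_P(V). (Hence λ has at most one fixed point in ℝ², namely Z = GV · T_P(GV) when the two lines meet.) -/

import Mathlib

set_option maxHeartbeats 4000000

noncomputable section

abbrev Pt := EuclideanSpace ℝ (Fin 2)

lemma exT {m1 m2 q1 q2 : ℝ} (h : m1 * q2 = m2 * q1) (hq : ¬(q1 = 0 ∧ q2 = 0)) :
    ∃ t : ℝ, m1 = t * q1 ∧ m2 = t * q2 := by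
  by_cases h1 : q1 = 0
  · have h2 : q2 ≠ 0 := fun h2 => hq ⟨h1, h2⟩
    refine ⟨m2 / q2, ?_, by field_simp⟩
    have hm1 : m1 * q2 = 0 := by rw [h, h1, mul_zero]
    rcases mul_eq_zero.mp hm1 with hm | hm
    · rw [hm, h1, mul_zero]
    · exact absurd hm h2
  · refine ⟨m1 / q1, by field_simp, ?_⟩
    field_simp
    linear_combination -h

lemma affApply (f : Pt ≃ᵃ[ℝ] Pt) (X Y Z : Pt) (u v : ℝ) :
    f (X + u • (Y - X) + v • (Z - X)) = f X + u • (f Y - f X) + v • (f Z - f X) := by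
  have h : X + u • (Y - X) + v • (Z - X) = (u • (Y -ᵥ X) + v • (Z -ᵥ X)) +ᵥ X := by
    simp only [vsub_eq_sub, vadd_eq_add]
    abel
  rw [h, f.map_vadd, map_add, map_smul, map_smul]
  have hy : f.linear (Y -ᵥ X) = f Y -ᵥ f X := by
    simpa using f.toAffineMap.linearMap_vsub Y X
  have hz : f.linear (Z -ᵥ X) = f Z -ᵥ f X := by
    simpa using f.toAffineMap.linearMap_vsub Z X
  rw [hy, hz]
  simp only [vsub_eq_sub, vadd_eq_add]
  abel

lemma affApply1 (f : Pt ≃ᵃ[ℝ] Pt) (X Y : Pt) (t : ℝ) :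
    f (X + t • (Y - X)) = f X + t • (f Y - f X) := by
  have h := affApply f X Y X t 0
  simpa using h

lemma collinear_triple_iff {p q r : Pt} (hqr : q ≠ r) :
    Collinear ℝ ({p, q, r} : Set Pt) ↔ ∃ t : ℝ, p - q = t • (r - q) := by
  constructor
  · intro h
    have hp : p ∈ line[ℝ, q, r] :=
      h.mem_affineSpan_of_mem_of_ne (by simp) (by simp) (by simp) hqr
    have hp2 : (p -ᵥ q) +ᵥ q ∈ line[ℝ, q, r] := by rwa [vsub_vadd]
    rw [vadd_left_mem_affineSpan_pair] at hp2
    obtain ⟨t, ht⟩ := hp2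
    refine ⟨t, ?_⟩
    simp only [← vsub_eq_sub]
    exact ht.symm
  · rintro ⟨t, ht⟩
    have hp2 : (p -ᵥ q) +ᵥ q ∈ line[ℝ, q, r] := by
      rw [vadd_left_mem_affineSpan_pair]
      exact ⟨t, by simp only [vsub_eq_sub]; rw [ht]⟩
    rw [vsub_vadd] at hp2
    exact collinear_insert_of_mem_affineSpan_pair hp2

lemma bridge {e1 e2 : Pt} (hind : ∀ r t : ℝ, r • e1 + t • e2 = 0 → r = 0 ∧ t = 0)
    {w z : Pt} {a b c d cw cz : ℝ} (hcw : cw ≠ 0) (hcz : cz ≠ 0)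
    (hw : cw • w = a • e1 + b • e2) (hz : cz • z = c • e1 + d • e2) :
    (∃ t : ℝ, w = t • z) ↔ ∃ t : ℝ, a = t * c ∧ b = t * d := by
  constructor
  · rintro ⟨t, rfl⟩
    have key : (a - t * cw / cz * c) • e1 + (b - t * cw / cz * d) • e2 = 0 := by
      have h2 : (t * cw / cz) • (cz • z) = (t * cw / cz) • (c • e1 + d • e2) := by rw [hz]
      rw [smul_smul] at h2
      have h3 : t * cw / cz * cz = cw * t := by field_simp
      rw [h3] at h2
      have h1 : (cw * t) • z = a • e1 + b • e2 := by rw [mul_smul]; exact hw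
      rw [h1] at h2
      linear_combination (norm := module) h2
    have hcomp := hind _ _ key
    exact ⟨t * cw / cz, by linarith [hcomp.1], by linarith [hcomp.2]⟩
  · rintro ⟨t, ha, hb⟩
    refine ⟨t * cz / cw, ?_⟩
    apply smul_right_injective Pt hcw
    have h3 : cw * (t * cz / cw) = t * cz := by field_simp
    calc cw • w = a • e1 + b • e2 := hw
    _ = cw • ((t * cz / cw) • z) := by
        rw [smul_smul, h3, mul_smul, hz, ha, hb]
        module

theorem stmt17
    (A B C : Pt) (hABC : AffineIndependent ℝ ![A, B, C])
    (α β γ : ℝ) (hsum : α + β + γ = 1)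
    (hα : α ≠ 0) (hβ : β ≠ 0) (hγ : γ ≠ 0)
    (hβγ : β + γ ≠ 0) (hγα : γ + α ≠ 0) (hαβ : α + β ≠ 0)
    (hab : α ≠ β) (hbc : β ≠ γ) (hca : γ ≠ α)
    (hs : α * β + β * γ + γ * α ≠ 0)
    (G : Pt) (hG : G = (3:ℝ)⁻¹ • (A + B + C))
    (P : Pt) (hP : P = α • A + β • B + γ • C)
    (P' : Pt)
    (hP'' : P' = (α * β + β * γ + γ * α)⁻¹ • ((β * γ) • A + (γ * α) • B + (α * β) • C))
    (Q : Pt) (hQ : Q = G - (2:ℝ)⁻¹ • (P' - G))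
    (D E F : Pt)
    (hD : D = (β + γ)⁻¹ • (β • B + γ • C))
    (hE : E = (γ + α)⁻¹ • (α • A + γ • C))
    (hF : F = (α + β)⁻¹ • (α • A + β • B))
    (D₃ E₃ F₃ : Pt)
    (hD₃ : D₃ = (β + γ)⁻¹ • (γ • B + β • C))
    (hE₃ : E₃ = (γ + α)⁻¹ • (γ • A + α • C))
    (hF₃ : F₃ = (α + β)⁻¹ • (β • A + α • B))
    (TP : Pt ≃ᵃ[ℝ] Pt) (hTPA : TP A = D) (hTPB : TP B = E) (hTPC : TP C = F)
    (TP' : Pt ≃ᵃ[ℝ] Pt) (hTP'A : TP' A = D₃) (hTP'B : TP' B = E₃) (hTP'C : TP' C = F₃)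
    (V : Pt) (hV : V = (2:ℝ) • Q - P)
    :
    ∀ R : Pt, TP' (TP.symm R) = R ↔
      (Collinear ℝ ({R, G, V} : Set Pt) ∧
       Collinear ℝ ({R, TP G, TP V} : Set Pt)) := by
  have hγeq : γ = 1 - α - β := by linarith
  subst hγeq
  intro R
  -- nonzero facts
  have hbg : β - (1 - α - β) ≠ 0 := sub_ne_zero.mpr hbc
  have hab' : α - β ≠ 0 := sub_ne_zero.mpr hab
  have hag : α - (1 - α - β) ≠ 0 := sub_ne_zero.mpr (Ne.symm hca)
  have hga2 : (1 - α - β) - α ≠ 0 := sub_ne_zero.mpr hca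
  have hM3 : ((α + β) * (β + (1 - α - β)) * ((1 - α - β) + α)) ≠ 0 := mul_ne_zero (mul_ne_zero hαβ hβγ) hγα
  have h3M3 : (3:ℝ) * ((α + β) * (β + (1 - α - β)) * ((1 - α - β) + α)) ≠ 0 := mul_ne_zero three_ne_zero hM3
  have h3s : (3:ℝ) * (α * β + β * (1 - α - β) + (1 - α - β) * α) ≠ 0 := mul_ne_zero three_ne_zero hs
  -- independence of B - A, C - A
  have hind : ∀ r t : ℝ, r • (B - A) + t • (C - A) = 0 → r = 0 ∧ t = 0 := by
    intro r t h
    have h2 : ∑ i, (![-(r+t), r, t]) i • (![A, B, C]) i = 0 := by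
      rw [Fin.sum_univ_three]
      simp only [Matrix.cons_val_zero, Matrix.cons_val_one, Matrix.head_cons,
        Matrix.cons_val_two, Matrix.tail_cons]
      linear_combination (norm := module) h
    have h1 : ∑ i, (![-(r+t), r, t]) i = 0 := by
      rw [Fin.sum_univ_three]
      simp only [Matrix.cons_val_zero, Matrix.cons_val_one, Matrix.head_cons,
        Matrix.cons_val_two, Matrix.tail_cons]
      ring
    have h0 := affineIndependent_iff.mp hABC Finset.univ _ h1 h2
    constructor
    · simpa using h0 1 (Finset.mem_univ 1)
    · simpa using h0 2 (Finset.mem_univ 2)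
  -- coordinates of TP.symm R
  obtain ⟨u, v, hX⟩ : ∃ u v : ℝ, TP.symm R = A + u • (B - A) + v • (C - A) := by
    have hli : LinearIndependent ℝ ![B - A, C - A] := by
      rw [Fintype.linearIndependent_iff]
      intro gg hgg
      have hgg2 : gg 0 • (B - A) + gg 1 • (C - A) = 0 := by
        rw [Fin.sum_univ_two] at hgg
        simpa using hgg
      have := hind _ _ hgg2
      intro i
      fin_cases i
      · exact this.1
      · exact this.2
    have hcard : Fintype.card (Fin 2) = Module.finrank ℝ Pt := by
      simp [finrank_euclideanSpace_fin]
    set bas := basisOfLinearIndependentOfCardEqFinrank hli hcard with hbas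
    have hco : ⇑bas = ![B - A, C - A] := coe_basisOfLinearIndependentOfCardEqFinrank hli hcard
    have hb0 : bas 0 = B - A := by have := congrFun hco 0; simpa using this
    have hb1 : bas 1 = C - A := by have := congrFun hco 1; simpa using this
    refine ⟨bas.repr (TP.symm R - A) 0, bas.repr (TP.symm R - A) 1, ?_⟩
    have h := bas.sum_repr (TP.symm R - A)
    rw [Fin.sum_univ_two, hb0, hb1] at h
    linear_combination (norm := module) -h
  -- R in coordinates
  have hRco : R = D + u • (E - D) + v • (F - D) := by
    conv_lhs => rw [← TP.apply_symm_apply R, hX]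
    rw [affApply TP A B C u v, hTPA, hTPB, hTPC]
  have hA1 : (1:ℝ) - α ≠ 0 := fun h => hβγ (by linarith)
  have hB1 : (1:ℝ) - β ≠ 0 := fun h => hγα (by linarith)
  -- vector coordinate identities
  have h1 : ((3:ℝ) * ((α + β) * (β + (1 - α - β)) * ((1 - α - β) + α))) • (R - G) = (3 * ((1 - u - v) * β * (α + β) + v * β * (β + (1 - α - β))) * ((1 - α - β) + α) - ((α + β) * (β + (1 - α - β)) * ((1 - α - β) + α))) • (B - A) + (3 * ((1 - u - v) * (1 - α - β) * ((1 - α - β) + α) + u * (1 - α - β) * (β + (1 - α - β))) * (α + β) - ((α + β) * (β + (1 - α - β)) * ((1 - α - β) + α))) • (C - A) := by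
    rw [hRco, hD, hE, hF, hG]
    match_scalars <;> (try field_simp [hs, hA1, hB1, hαβ, hβγ, hγα, hγ]) <;> ring
  have h2 : ((3:ℝ) * (α * β + β * (1 - α - β) + (1 - α - β) * α)) • (V - G) = ((2 - 3 * β) * (α * β + β * (1 - α - β) + (1 - α - β) * α) - 3 * (1 - α - β) * α) • (B - A) + ((2 - 3 * (1 - α - β)) * (α * β + β * (1 - α - β) + (1 - α - β) * α) - 3 * α * β) • (C - A) := by
    rw [hV, hQ, hP'', hP, hG]
    set s := α * β + β * (1 - α - β) + (1 - α - β) * α with hsdef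
    match_scalars <;> (try field_simp [hs, hA1, hB1, hαβ, hβγ, hγα, hγ]) <;> ring
  have h3 : (3:ℝ) • ((A + u • (B - A) + v • (C - A)) - G) =
      (3 * u - 1) • (B - A) + (3 * v - 1) • (C - A) := by
    rw [hG]
    match_scalars <;> (try field_simp [hs, hA1, hB1, hαβ, hβγ, hγα, hγ]) <;> ring
  have h4 : ((α + β) * (β + (1 - α - β)) * ((1 - α - β) + α)) • (TP' (A + u • (B - A) + v • (C - A)) - R) =
      (-(((1 - α - β) + α) * ((1 - u - v) * (β - (1 - α - β)) * (α + β) - v * (α - β) * (β + (1 - α - β))))) • (B - A) + ((α + β) * ((1 - u - v) * (β - (1 - α - β)) * ((1 - α - β) + α) + u * (α - (1 - α - β)) * (β + (1 - α - β)))) • (C - A) := by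
    rw [affApply TP' A B C u v, hTP'A, hTP'B, hTP'C, hD₃, hE₃, hF₃, hRco, hD, hE, hF]
    match_scalars <;> (try field_simp [hs, hA1, hB1, hαβ, hβγ, hγα, hγ]) <;> ring
  -- G ≠ V
  have hp12 : ¬(((2 - 3 * β) * (α * β + β * (1 - α - β) + (1 - α - β) * α) - 3 * (1 - α - β) * α) = 0 ∧ ((2 - 3 * (1 - α - β)) * (α * β + β * (1 - α - β) + (1 - α - β) * α) - 3 * α * β) = 0) := by
    rintro ⟨hq1, hq2⟩
    have hsub : (β - (1 - α - β)) * (α - (α * β + β * (1 - α - β) + (1 - α - β) * α)) = 0 := by linear_combination (1/3) * hq1 - (1/3) * hq2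
    have hsA : α - (α * β + β * (1 - α - β) + (1 - α - β) * α) = 0 := (mul_eq_zero.mp hsub).resolve_left hbg
    have h31 : α * (3 * α - 1) = 0 := by linear_combination hq1 + (2 - 3 * β) * hsA
    have hα3 : 3 * α - 1 = 0 := (mul_eq_zero.mp h31).resolve_left hα
    have hbg2 : (β - (1 - α - β))^2 = 0 := by linear_combination (-1 - α) * hα3 + 4 * hsA
    exact hbg (pow_eq_zero_iff two_ne_zero |>.mp hbg2)
  have hGV : G ≠ V := by
    intro hEq
    have h20 := h2
    rw [← hEq, sub_self, smul_zero] at h20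
    have hcomp := hind _ _ h20.symm
    exact hp12 ⟨hcomp.1, hcomp.2⟩
  have hTGV : TP G ≠ TP V := fun h => hGV (TP.injective h)
  -- fixed point condition in scalar form
  have keyL : (TP' (TP.symm R) = R) ↔ (((1 - u - v) * (β - (1 - α - β)) * (α + β) - v * (α - β) * (β + (1 - α - β))) = 0 ∧ ((1 - u - v) * (β - (1 - α - β)) * ((1 - α - β) + α) + u * (α - (1 - α - β)) * (β + (1 - α - β))) = 0) := by
    rw [hX]
    constructor
    · intro hfix
      have h40 := h4
      rw [hfix, sub_self, smul_zero] at h40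
      have hcomp := hind _ _ h40.symm
      constructor
      · have hn : ((1 - α - β) + α) * ((1 - u - v) * (β - (1 - α - β)) * (α + β) - v * (α - β) * (β + (1 - α - β))) = 0 := by
          have := hcomp.1
          linarith [hcomp.1]
        exact (mul_eq_zero.mp hn).resolve_left hγα
      · exact (mul_eq_zero.mp hcomp.2).resolve_left hαβ
    · rintro ⟨hL1, hL2⟩
      have h40 := h4
      rw [hL1, hL2] at h40
      simp only [mul_zero, neg_zero, zero_smul, add_zero, zero_add] at h40
      have hz := (smul_eq_zero.mp h40).resolve_left hM3
      exact sub_eq_zero.mp hz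
  -- collinearity conditions in scalar form
  have keyC1 : Collinear ℝ ({R, G, V} : Set Pt) ↔
      ∃ t : ℝ, (3 * ((1 - u - v) * β * (α + β) + v * β * (β + (1 - α - β))) * ((1 - α - β) + α) - ((α + β) * (β + (1 - α - β)) * ((1 - α - β) + α))) = t * ((2 - 3 * β) * (α * β + β * (1 - α - β) + (1 - α - β) * α) - 3 * (1 - α - β) * α) ∧ (3 * ((1 - u - v) * (1 - α - β) * ((1 - α - β) + α) + u * (1 - α - β) * (β + (1 - α - β))) * (α + β) - ((α + β) * (β + (1 - α - β)) * ((1 - α - β) + α))) = t * ((2 - 3 * (1 - α - β)) * (α * β + β * (1 - α - β) + (1 - α - β) * α) - 3 * α * β) := by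
    rw [collinear_triple_iff hGV]
    exact bridge hind h3M3 h3s h1 h2
  have keyC2 : Collinear ℝ ({R, TP G, TP V} : Set Pt) ↔
      ∃ t : ℝ, (3 * u - 1) = t * ((2 - 3 * β) * (α * β + β * (1 - α - β) + (1 - α - β) * α) - 3 * (1 - α - β) * α) ∧ (3 * v - 1) = t * ((2 - 3 * (1 - α - β)) * (α * β + β * (1 - α - β) + (1 - α - β) * α) - 3 * α * β) := by
    rw [collinear_triple_iff hTGV]
    have keymid : ∀ t : ℝ, (R - TP G = t • (TP V - TP G)) ↔
        ((A + u • (B - A) + v • (C - A)) - G = t • (V - G)) := by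
      intro t
      constructor
      · intro h
        have hR' : R = TP (G + t • (V - G)) := by
          rw [affApply1 TP G V t]
          linear_combination (norm := module) h
        have hS' : TP.symm R = G + t • (V - G) := by rw [hR', TP.symm_apply_apply]
        rw [hX] at hS'
        linear_combination (norm := module) hS'
      · intro h
        have hS' : TP.symm R = G + t • (V - G) := by
          rw [hX]
          linear_combination (norm := module) h
        have hR' : R = TP (G + t • (V - G)) := by rw [← hS', TP.apply_symm_apply]
        rw [affApply1 TP G V t] at hR'
        linear_combination (norm := module) hR'
    rw [exists_congr keymid]
    exact bridge hind three_ne_zero h3s h3 h2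
  -- the scalar core equivalence
  have keyS : (((1 - u - v) * (β - (1 - α - β)) * (α + β) - v * (α - β) * (β + (1 - α - β))) = 0 ∧ ((1 - u - v) * (β - (1 - α - β)) * ((1 - α - β) + α) + u * (α - (1 - α - β)) * (β + (1 - α - β))) = 0) ↔
      ((∃ t : ℝ, (3 * ((1 - u - v) * β * (α + β) + v * β * (β + (1 - α - β))) * ((1 - α - β) + α) - ((α + β) * (β + (1 - α - β)) * ((1 - α - β) + α))) = t * ((2 - 3 * β) * (α * β + β * (1 - α - β) + (1 - α - β) * α) - 3 * (1 - α - β) * α) ∧ (3 * ((1 - u - v) * (1 - α - β) * ((1 - α - β) + α) + u * (1 - α - β) * (β + (1 - α - β))) * (α + β) - ((α + β) * (β + (1 - α - β)) * ((1 - α - β) + α))) = t * ((2 - 3 * (1 - α - β)) * (α * β + β * (1 - α - β) + (1 - α - β) * α) - 3 * α * β)) ∧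
       (∃ t : ℝ, (3 * u - 1) = t * ((2 - 3 * β) * (α * β + β * (1 - α - β) + (1 - α - β) * α) - 3 * (1 - α - β) * α) ∧ (3 * v - 1) = t * ((2 - 3 * (1 - α - β)) * (α * β + β * (1 - α - β) + (1 - α - β) * α) - 3 * α * β))) := by
    constructor
    · rintro ⟨hL1, hL2⟩
      have A1 : (β + (1 - α - β)) * (((β - (1 - α - β)) * (α - (1 - α - β)) * (α + β) + (α - (1 - α - β)) * (α - β) * (β + (1 - α - β)) - (α - β) * (β - (1 - α - β)) * ((1 - α - β) + α)) * u + ((β - (1 - α - β)) * (α - β) * ((1 - α - β) + α))) = 0 := by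
        linear_combination (-((β - (1 - α - β)) * ((1 - α - β) + α))) * hL1 + ((β - (1 - α - β)) * (α + β) + (α - β) * (β + (1 - α - β))) * hL2
      have hEu : ((β - (1 - α - β)) * (α - (1 - α - β)) * (α + β) + (α - (1 - α - β)) * (α - β) * (β + (1 - α - β)) - (α - β) * (β - (1 - α - β)) * ((1 - α - β) + α)) * u = -((β - (1 - α - β)) * (α - β) * ((1 - α - β) + α)) := by
        have := (mul_eq_zero.mp A1).resolve_left hβγ
        linarith
      have A2 : (β + (1 - α - β)) * (((β - (1 - α - β)) * (α - (1 - α - β)) * (α + β) + (α - (1 - α - β)) * (α - β) * (β + (1 - α - β)) - (α - β) * (β - (1 - α - β)) * ((1 - α - β) + α)) * v - ((β - (1 - α - β)) * (α - (1 - α - β)) * (α + β))) = 0 := by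
        linear_combination (-(-((β - (1 - α - β)) * ((1 - α - β) + α)) + (α - (1 - α - β)) * (β + (1 - α - β)))) * hL1 + (-((β - (1 - α - β)) * (α + β))) * hL2
      have hEv : ((β - (1 - α - β)) * (α - (1 - α - β)) * (α + β) + (α - (1 - α - β)) * (α - β) * (β + (1 - α - β)) - (α - β) * (β - (1 - α - β)) * ((1 - α - β) + α)) * v = ((β - (1 - α - β)) * (α - (1 - α - β)) * (α + β)) := by
        have := (mul_eq_zero.mp A2).resolve_left hβγ
        linarith
      have hDcne : ((β - (1 - α - β)) * (α - (1 - α - β)) * (α + β) + (α - (1 - α - β)) * (α - β) * (β + (1 - α - β)) - (α - β) * (β - (1 - α - β)) * ((1 - α - β) + α)) ≠ 0 := by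
        intro h
        have hPu : ((β - (1 - α - β)) * (α - β) * ((1 - α - β) + α)) = 0 := by linear_combination hEu - u * h
        exact (mul_ne_zero (mul_ne_zero hbg hab') hγα) hPu
      have hDetS : (3 * u - 1) * ((2 - 3 * (1 - α - β)) * (α * β + β * (1 - α - β) + (1 - α - β) * α) - 3 * α * β) - (3 * v - 1) * ((2 - 3 * β) * (α * β + β * (1 - α - β) + (1 - α - β) * α) - 3 * (1 - α - β) * α) = 0 := by
        have h5 : ((β - (1 - α - β)) * (α - (1 - α - β)) * (α + β) + (α - (1 - α - β)) * (α - β) * (β + (1 - α - β)) - (α - β) * (β - (1 - α - β)) * ((1 - α - β) + α)) * ((3 * u - 1) * ((2 - 3 * (1 - α - β)) * (α * β + β * (1 - α - β) + (1 - α - β) * α) - 3 * α * β) - (3 * v - 1) * ((2 - 3 * β) * (α * β + β * (1 - α - β) + (1 - α - β) * α) - 3 * (1 - α - β) * α)) = 0 := by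
          linear_combination (3 * ((2 - 3 * (1 - α - β)) * (α * β + β * (1 - α - β) + (1 - α - β) * α) - 3 * α * β)) * hEu - (3 * ((2 - 3 * β) * (α * β + β * (1 - α - β) + (1 - α - β) * α) - 3 * (1 - α - β) * α)) * hEv
        exact (mul_eq_zero.mp h5).resolve_left hDcne
      have hDetR : (3 * ((1 - u - v) * β * (α + β) + v * β * (β + (1 - α - β))) * ((1 - α - β) + α) - ((α + β) * (β + (1 - α - β)) * ((1 - α - β) + α))) * ((2 - 3 * (1 - α - β)) * (α * β + β * (1 - α - β) + (1 - α - β) * α) - 3 * α * β) - (3 * ((1 - u - v) * (1 - α - β) * ((1 - α - β) + α) + u * (1 - α - β) * (β + (1 - α - β))) * (α + β) - ((α + β) * (β + (1 - α - β)) * ((1 - α - β) + α))) * ((2 - 3 * β) * (α * β + β * (1 - α - β) + (1 - α - β) * α) - 3 * (1 - α - β) * α) = 0 := by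
        have h6 : ((β - (1 - α - β)) * (α - (1 - α - β)) * (α + β) + (α - (1 - α - β)) * (α - β) * (β + (1 - α - β)) - (α - β) * (β - (1 - α - β)) * ((1 - α - β) + α)) * ((3 * ((1 - u - v) * β * (α + β) + v * β * (β + (1 - α - β))) * ((1 - α - β) + α) - ((α + β) * (β + (1 - α - β)) * ((1 - α - β) + α))) * ((2 - 3 * (1 - α - β)) * (α * β + β * (1 - α - β) + (1 - α - β) * α) - 3 * α * β) - (3 * ((1 - u - v) * (1 - α - β) * ((1 - α - β) + α) + u * (1 - α - β) * (β + (1 - α - β))) * (α + β) - ((α + β) * (β + (1 - α - β)) * ((1 - α - β) + α))) * ((2 - 3 * β) * (α * β + β * (1 - α - β) + (1 - α - β) * α) - 3 * (1 - α - β) * α)) = 0 := by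
          linear_combination (((2 - 3 * (1 - α - β)) * (α * β + β * (1 - α - β) + (1 - α - β) * α) - 3 * α * β) * ((-3) * β * (α + β) * ((1 - α - β) + α)) - ((2 - 3 * β) * (α * β + β * (1 - α - β) + (1 - α - β) * α) - 3 * (1 - α - β) * α) * (3 * (1 - α - β) * (β - α) * (α + β))) * hEu +
            (((2 - 3 * (1 - α - β)) * (α * β + β * (1 - α - β) + (1 - α - β) * α) - 3 * α * β) * (3 * β * ((1 - α - β) - α) * ((1 - α - β) + α)) - ((2 - 3 * β) * (α * β + β * (1 - α - β) + (1 - α - β) * α) - 3 * (1 - α - β) * α) * ((-3) * (1 - α - β) * ((1 - α - β) + α) * (α + β))) * hEv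
        exact (mul_eq_zero.mp h6).resolve_left hDcne
      constructor
      · exact exT (by linear_combination hDetR) hp12
      · exact exT (by linear_combination hDetS) hp12
    · rintro ⟨⟨t, hr1, hr2⟩, ⟨t', hu3, hv3⟩⟩
      have hDetS : (3 * u - 1) * ((2 - 3 * (1 - α - β)) * (α * β + β * (1 - α - β) + (1 - α - β) * α) - 3 * α * β) - (3 * v - 1) * ((2 - 3 * β) * (α * β + β * (1 - α - β) + (1 - α - β) * α) - 3 * (1 - α - β) * α) = 0 := by
        linear_combination ((2 - 3 * (1 - α - β)) * (α * β + β * (1 - α - β) + (1 - α - β) * α) - 3 * α * β) * hu3 - ((2 - 3 * β) * (α * β + β * (1 - α - β) + (1 - α - β) * α) - 3 * (1 - α - β) * α) * hv3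
      have hDetR : (3 * ((1 - u - v) * β * (α + β) + v * β * (β + (1 - α - β))) * ((1 - α - β) + α) - ((α + β) * (β + (1 - α - β)) * ((1 - α - β) + α))) * ((2 - 3 * (1 - α - β)) * (α * β + β * (1 - α - β) + (1 - α - β) * α) - 3 * α * β) - (3 * ((1 - u - v) * (1 - α - β) * ((1 - α - β) + α) + u * (1 - α - β) * (β + (1 - α - β))) * (α + β) - ((α + β) * (β + (1 - α - β)) * ((1 - α - β) + α))) * ((2 - 3 * β) * (α * β + β * (1 - α - β) + (1 - α - β) * α) - 3 * (1 - α - β) * α) = 0 := by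
        linear_combination ((2 - 3 * (1 - α - β)) * (α * β + β * (1 - α - β) + (1 - α - β) * α) - 3 * α * β) * hr1 - ((2 - 3 * β) * (α * β + β * (1 - α - β) + (1 - α - β) * α) - 3 * (1 - α - β) * α) * hr2
      have hPRE : ((α - β) * (β - (1 - α - β)) * ((1 - α - β) - α) * (α * β + β * (1 - α - β) + (1 - α - β) * α)) ≠ 0 :=
        mul_ne_zero (mul_ne_zero (mul_ne_zero hab' hbg) hga2) hs
      have B1 : ((α - β) * (β - (1 - α - β)) * ((1 - α - β) - α) * (α * β + β * (1 - α - β) + (1 - α - β) * α)) * (((β - (1 - α - β)) * (α - (1 - α - β)) * (α + β) + (α - (1 - α - β)) * (α - β) * (β + (1 - α - β)) - (α - β) * (β - (1 - α - β)) * ((1 - α - β) + α)) * u + ((β - (1 - α - β)) * (α - β) * ((1 - α - β) + α))) = 0 := by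
        linear_combination (-(1:ℝ)/9) * ((3 * β * ((1 - α - β) - α) * ((1 - α - β) + α)) * ((2 - 3 * (1 - α - β)) * (α * β + β * (1 - α - β) + (1 - α - β) * α) - 3 * α * β) - ((-3) * (1 - α - β) * ((1 - α - β) + α) * (α + β)) * ((2 - 3 * β) * (α * β + β * (1 - α - β) + (1 - α - β) * α) - 3 * (1 - α - β) * α)) * hDetS +
          (-(1:ℝ)/3) * ((2 - 3 * β) * (α * β + β * (1 - α - β) + (1 - α - β) * α) - 3 * (1 - α - β) * α) * hDetR
      have hEu : ((β - (1 - α - β)) * (α - (1 - α - β)) * (α + β) + (α - (1 - α - β)) * (α - β) * (β + (1 - α - β)) - (α - β) * (β - (1 - α - β)) * ((1 - α - β) + α)) * u = -((β - (1 - α - β)) * (α - β) * ((1 - α - β) + α)) := by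
        have := (mul_eq_zero.mp B1).resolve_left hPRE
        linarith
      have B2 : ((α - β) * (β - (1 - α - β)) * ((1 - α - β) - α) * (α * β + β * (1 - α - β) + (1 - α - β) * α)) * (((β - (1 - α - β)) * (α - (1 - α - β)) * (α + β) + (α - (1 - α - β)) * (α - β) * (β + (1 - α - β)) - (α - β) * (β - (1 - α - β)) * ((1 - α - β) + α)) * v - ((β - (1 - α - β)) * (α - (1 - α - β)) * (α + β))) = 0 := by
        linear_combination ((1:ℝ)/9) * (((-3) * β * (α + β) * ((1 - α - β) + α)) * ((2 - 3 * (1 - α - β)) * (α * β + β * (1 - α - β) + (1 - α - β) * α) - 3 * α * β) - (3 * (1 - α - β) * (β - α) * (α + β)) * ((2 - 3 * β) * (α * β + β * (1 - α - β) + (1 - α - β) * α) - 3 * (1 - α - β) * α)) * hDetS +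
          (-(1:ℝ)/3) * ((2 - 3 * (1 - α - β)) * (α * β + β * (1 - α - β) + (1 - α - β) * α) - 3 * α * β) * hDetR
      have hEv : ((β - (1 - α - β)) * (α - (1 - α - β)) * (α + β) + (α - (1 - α - β)) * (α - β) * (β + (1 - α - β)) - (α - β) * (β - (1 - α - β)) * ((1 - α - β) + α)) * v = ((β - (1 - α - β)) * (α - (1 - α - β)) * (α + β)) := by
        have := (mul_eq_zero.mp B2).resolve_left hPRE
        linarith
      have hDcne : ((β - (1 - α - β)) * (α - (1 - α - β)) * (α + β) + (α - (1 - α - β)) * (α - β) * (β + (1 - α - β)) - (α - β) * (β - (1 - α - β)) * ((1 - α - β) + α)) ≠ 0 := by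
        intro h
        have hPu : ((β - (1 - α - β)) * (α - β) * ((1 - α - β) + α)) = 0 := by linear_combination hEu - u * h
        exact (mul_ne_zero (mul_ne_zero hbg hab') hγα) hPu
      constructor
      · have h7 : ((β - (1 - α - β)) * (α - (1 - α - β)) * (α + β) + (α - (1 - α - β)) * (α - β) * (β + (1 - α - β)) - (α - β) * (β - (1 - α - β)) * ((1 - α - β) + α)) * ((1 - u - v) * (β - (1 - α - β)) * (α + β) - v * (α - β) * (β + (1 - α - β))) = 0 := by
          linear_combination (-((β - (1 - α - β)) * (α + β))) * hEu + (-((β - (1 - α - β)) * (α + β)) - (α - β) * (β + (1 - α - β))) * hEv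
        exact (mul_eq_zero.mp h7).resolve_left hDcne
      · have h8 : ((β - (1 - α - β)) * (α - (1 - α - β)) * (α + β) + (α - (1 - α - β)) * (α - β) * (β + (1 - α - β)) - (α - β) * (β - (1 - α - β)) * ((1 - α - β) + α)) * ((1 - u - v) * (β - (1 - α - β)) * ((1 - α - β) + α) + u * (α - (1 - α - β)) * (β + (1 - α - β))) = 0 := by
          linear_combination (-((β - (1 - α - β)) * ((1 - α - β) + α)) + (α - (1 - α - β)) * (β + (1 - α - β))) * hEu + (-((β - (1 - α - β)) * ((1 - α - β) + α))) * hEv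
        exact (mul_eq_zero.mp h8).resolve_left hDcne
  rw [keyL, keyC1, keyC2]
  exact keyS
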